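/- Let Z be a Dedekind domain and S = {p_1,…,p_m} a finite set of nonzero prime ideals of Z. Then the set of principal ideals ⟨a⟩ generated by irreducible elements a ∈ Z whose support (set of prime ideals containing a) is contained in S is finite. -/

import Mathlib

open UniqueFactorizationMonoid

theorem stmt_3 {Z : Type*} [CommRing Z] [IsDomain Z] [IsDedekindDomain Z]
    (S : Finset (Ideal Z)) (hS : ∀ p ∈ S, p.IsPrime ∧ p ≠ ⊥) :
    {I : Ideal Z | ∃ a : Z, Irreducible a ∧ I = Ideal.span {a} ∧
      ∀ p : Ideal Z, p.IsPrime → a ∈ p → p ∈ S}.Finite := by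
  classical
  set T := {I : Ideal Z | ∃ a : Z, Irreducible a ∧ I = Ideal.span {a} ∧
      ∀ p : Ideal Z, p.IsPrime → a ∈ p → p ∈ S} with hT
  -- exponent vector map
  set e : Ideal Z → (S → ℕ) := fun I p => Multiset.count p.1 (normalizedFactors I) with he
  -- basic facts about members of T
  have hne : ∀ I ∈ T, I ≠ 0 := by
    rintro I ⟨a, ha, rfl, -⟩ h0
    rw [Ideal.zero_eq_bot, Ideal.span_singleton_eq_bot] at h0
    exact ha.ne_zero h0
  have hfac : ∀ I ∈ T, ∀ q ∈ normalizedFactors I, q ∈ S := by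
    rintro I ⟨a, ha, rfl, hsup⟩ q hq
    have hqp : Prime q := prime_of_normalized_factor q hq
    have hdvd : q ∣ Ideal.span {a} := dvd_of_mem_normalizedFactors hq
    have hle : Ideal.span {a} ≤ q := Ideal.le_of_dvd hdvd
    exact hsup q (Ideal.isPrime_of_prime hqp) (hle (Ideal.mem_span_singleton_self a))
  have hprod : ∀ I ∈ T, (normalizedFactors I).prod = I := by
    intro I hI
    have := prod_normalizedFactors (hne I hI)
    rwa [associated_iff_eq] at this
  -- e I ≤ e J implies I ∣ J
  have hdvd : ∀ I ∈ T, ∀ J ∈ T, e I ≤ e J → I ∣ J := by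
    intro I hI J hJ hle
    have hm : normalizedFactors I ≤ normalizedFactors J := by
      rw [Multiset.le_iff_count]
      intro q
      by_cases hq : q ∈ S
      · exact hle ⟨q, hq⟩
      · have : q ∉ normalizedFactors I := fun h => hq (hfac I hI q h)
        simp [Multiset.count_eq_zero_of_notMem this]
    calc I = (normalizedFactors I).prod := (hprod I hI).symm
      _ ∣ (normalizedFactors J).prod := Multiset.prod_dvd_prod_of_le hm
      _ = J := hprod J hJ
  -- I ∣ J with I, J ∈ T implies I = J
  have hanti : ∀ I ∈ T, ∀ J ∈ T, I ∣ J → I = J := by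
    rintro I ⟨a, ha, rfl, -⟩ J ⟨b, hb, rfl, -⟩ hd
    have hd' : a ∣ b := Ideal.mem_span_singleton.mp
      (Ideal.le_of_dvd hd (Ideal.mem_span_singleton_self b))
    obtain ⟨c, rfl⟩ := hd'
    rcases hb.isUnit_or_isUnit rfl with h | h
    · exact absurd h ha.not_isUnit
    · rw [Ideal.span_singleton_eq_span_singleton]
      exact ⟨h.unit, rfl⟩
  -- the image of T under e is an antichain, hence finite
  have hinj : Set.InjOn e T := by
    intro I hI J hJ hIJ
    exact hanti I hI J hJ (hdvd I hI J hJ (le_of_eq hIJ))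
  have himage : (e '' T).Finite := by
    haveI : IsWellOrder ℕ (· < ·) := ⟨⟩
    have hpwo : (e '' T).IsPWO := Set.isPWO_of_wellQuasiOrderedLE _
    have hac : IsAntichain (· ≤ ·) (e '' T) := by
      rintro - ⟨I, hI, rfl⟩ - ⟨J, hJ, rfl⟩ hne' hle
      exact hne' (congrArg e (hanti I hI J hJ (hdvd I hI J hJ hle)))
    exact hac.finite_of_partiallyWellOrderedOn hpwo
  exact Set.Finite.of_finite_image himage hinj
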